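/- Let ψ : ℕ → ℝ be a nonnegative sequence with Σ_{k=1}^∞ k·ψ(k) < ∞, let β ∈ ℝ and n ∈ ℕ (n ≥ 1). Then Σ_{k=n}^∞ ψ(k) − (π/n)·Σ_{k=1}^∞ k·ψ(k+n) ≤ sup_{t∈ℝ} |Ψ_{β,n}(t)| ≤ Σ_{k=n}^∞ ψ(k). -/

import Mathlib

open MeasureTheory Real Filter

set_option maxHeartbeats 1000000

noncomputable section

/-- The kernel `Ψ_{β,n}(t) = Σ_{k=n}^∞ ψ(k) cos(k t - βπ/2)`. -/
def PsiKerN (ψ : ℕ → ℝ) (β : ℝ) (n : ℕ) (t : ℝ) : ℝ :=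
  ∑' k : ℕ, ψ (k + n) * Real.cos (((k + n : ℕ) : ℝ) * t - β * π / 2)

lemma one_sub_cos_le_abs' (x : ℝ) : 1 - Real.cos x ≤ |x| := by
  have h1 : Real.cos x = 1 - 2 * Real.sin (x / 2) ^ 2 := by
    have h2 := Real.cos_two_mul (x / 2)
    have h3 := Real.sin_sq_add_cos_sq (x / 2)
    have hx : 2 * (x / 2) = x := by ring
    rw [hx] at h2
    nlinarith
  have h4 : |Real.sin (x / 2)| ≤ |x / 2| := Real.abs_sin_le_abs
  have h5 : |Real.sin (x / 2)| ≤ 1 := Real.abs_sin_le_one _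
  have h6 : Real.sin (x / 2) ^ 2 = |Real.sin (x / 2)| ^ 2 := (sq_abs _).symm
  have h7 : |x / 2| = |x| / 2 := by rw [abs_div]; norm_num
  nlinarith [abs_nonneg (Real.sin (x / 2))]

/-- Two-sided bound for the uniform norm of `Ψ_{β,n}`. -/
theorem PsiKerN_norm_bounds (ψ : ℕ → ℝ) (hψ : ∀ k, 0 ≤ ψ k)
    (hsum : Summable (fun k : ℕ => (k : ℝ) * ψ k)) (β : ℝ) (n : ℕ) (hn : 1 ≤ n) :
    (∑' k : ℕ, ψ (k + n)) - (π / (n : ℝ)) * (∑' k : ℕ, ((k : ℝ) + 1) * ψ (k + 1 + n)) ≤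
        (⨆ t : ℝ, |PsiKerN ψ β n t|) ∧
      (⨆ t : ℝ, |PsiKerN ψ β n t|) ≤ ∑' k : ℕ, ψ (k + n) := by
  have hnpos : (0 : ℝ) < (n : ℝ) := by exact_mod_cast hn
  -- summability facts
  have hψsum : Summable ψ := by
    rw [← summable_nat_add_iff 1]
    refine Summable.of_nonneg_of_le (fun k => hψ _) (fun k => ?_)
      ((summable_nat_add_iff 1).2 hsum)
    have h1 : (1 : ℝ) ≤ ((k + 1 : ℕ) : ℝ) := by push_cast; linarith [Nat.cast_nonneg (α := ℝ) k]
    nlinarith [hψ (k + 1)]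
  have hS : Summable (fun k : ℕ => ψ (k + n)) := (summable_nat_add_iff n).2 hψsum
  have hK : Summable (fun k : ℕ => (k : ℝ) * ψ (k + n)) := by
    refine Summable.of_nonneg_of_le (fun k => mul_nonneg (Nat.cast_nonneg k) (hψ _))
      (fun k => ?_) ((summable_nat_add_iff n).2 hsum)
    refine mul_le_mul_of_nonneg_right ?_ (hψ _)
    exact_mod_cast Nat.le_add_right k n
  have hT : (∑' k : ℕ, (k : ℝ) * ψ (k + n)) = ∑' k : ℕ, ((k : ℝ) + 1) * ψ (k + 1 + n) := by
    rw [Summable.tsum_eq_zero_add hK]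
    simp only [Nat.cast_zero, zero_mul, zero_add]
    exact tsum_congr fun k => by push_cast; ring
  have hterm : ∀ t : ℝ, Summable
      (fun k : ℕ => ψ (k + n) * Real.cos (((k + n : ℕ) : ℝ) * t - β * π / 2)) := by
    intro t
    refine Summable.of_norm_bounded hS fun k => ?_
    rw [Real.norm_eq_abs, abs_mul, abs_of_nonneg (hψ _)]
    calc ψ (k + n) * |Real.cos _| ≤ ψ (k + n) * 1 :=
          mul_le_mul_of_nonneg_left (Real.abs_cos_le_one _) (hψ _)
      _ = ψ (k + n) := mul_one _
  have hub : ∀ t : ℝ, |PsiKerN ψ β n t| ≤ ∑' k : ℕ, ψ (k + n) := by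
    intro t
    have habs : ∀ k : ℕ,
        ‖ψ (k + n) * Real.cos (((k + n : ℕ) : ℝ) * t - β * π / 2)‖ ≤ ψ (k + n) := by
      intro k
      rw [Real.norm_eq_abs, abs_mul, abs_of_nonneg (hψ _)]
      calc ψ (k + n) * |Real.cos (((k + n : ℕ) : ℝ) * t - β * π / 2)| ≤ ψ (k + n) * 1 :=
            mul_le_mul_of_nonneg_left (Real.abs_cos_le_one _) (hψ _)
        _ = ψ (k + n) := mul_one _
    have h := tsum_of_norm_bounded hS.hasSum habs
    simpa [Real.norm_eq_abs, PsiKerN] using h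
  have hbdd : BddAbove (Set.range fun t : ℝ => |PsiKerN ψ β n t|) := by
    refine ⟨∑' k : ℕ, ψ (k + n), ?_⟩
    rintro _ ⟨t, rfl⟩
    exact hub t
  constructor
  · -- lower bound
    set θ : ℝ := β * π / 2 with hθ
    set m : ℤ := round (θ / (2 * π)) with hm
    set t₀ : ℝ := (θ - 2 * π * m) / n with ht₀
    have hπ := Real.pi_pos
    have h2π : (0 : ℝ) < 2 * π := by linarith
    have habs : |θ - 2 * π * m| ≤ π := by
      have h := abs_sub_round (θ / (2 * π))
      have heq : θ - 2 * π * m = 2 * π * (θ / (2 * π) - m) := by field_simp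
      rw [heq, abs_mul, abs_of_pos h2π]
      nlinarith
    have ht0 : |t₀| ≤ π / n := by
      rw [ht₀, abs_div, abs_of_pos hnpos]
      gcongr
    have hcos : ∀ k : ℕ, Real.cos (((k + n : ℕ) : ℝ) * t₀ - θ) = Real.cos ((k : ℝ) * t₀) := by
      intro k
      have hnt : (n : ℝ) * t₀ = θ - 2 * π * m := by
        rw [ht₀]; field_simp
      have heq : ((k + n : ℕ) : ℝ) * t₀ - θ = (k : ℝ) * t₀ - (m : ℝ) * (2 * π) := by
        push_cast
        have : ((k : ℝ) + n) * t₀ = (k : ℝ) * t₀ + (n : ℝ) * t₀ := by ring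
        rw [this, hnt]; ring
      rw [heq]
      exact Real.cos_sub_int_mul_two_pi _ m
    have hlow : ∀ k : ℕ, ψ (k + n) - π / n * ((k : ℝ) * ψ (k + n)) ≤
        ψ (k + n) * Real.cos ((k : ℝ) * t₀) := by
      intro k
      have h1 : 1 - Real.cos ((k : ℝ) * t₀) ≤ (k : ℝ) * (π / n) := by
        have := one_sub_cos_le_abs' ((k : ℝ) * t₀)
        have h2 : |(k : ℝ) * t₀| = (k : ℝ) * |t₀| := by
          rw [abs_mul, Nat.abs_cast]
        have h3 : (k : ℝ) * |t₀| ≤ (k : ℝ) * (π / n) :=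
          mul_le_mul_of_nonneg_left ht0 (Nat.cast_nonneg k)
        linarith
      nlinarith [hψ (k + n), Nat.cast_nonneg (α := ℝ) k]
    have hsum2 : Summable (fun k : ℕ => ψ (k + n) - π / n * ((k : ℝ) * ψ (k + n))) :=
      hS.sub (hK.mul_left _)
    have hsum3 : Summable (fun k : ℕ => ψ (k + n) * Real.cos ((k : ℝ) * t₀)) := by
      have := hterm t₀
      refine this.congr fun k => ?_
      rw [hcos k]
    have hkey : (∑' k : ℕ, ψ (k + n)) - π / n * (∑' k : ℕ, (k : ℝ) * ψ (k + n)) ≤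
        PsiKerN ψ β n t₀ := by
      have hPsi : PsiKerN ψ β n t₀ = ∑' k : ℕ, ψ (k + n) * Real.cos ((k : ℝ) * t₀) := by
        unfold PsiKerN
        exact tsum_congr fun k => by rw [hcos k]
      rw [hPsi]
      calc (∑' k : ℕ, ψ (k + n)) - π / n * (∑' k : ℕ, (k : ℝ) * ψ (k + n))
          = ∑' k : ℕ, (ψ (k + n) - π / n * ((k : ℝ) * ψ (k + n))) := by
            rw [Summable.tsum_sub hS (hK.mul_left _), tsum_mul_left]
        _ ≤ ∑' k : ℕ, ψ (k + n) * Real.cos ((k : ℝ) * t₀) :=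
            Summable.tsum_le_tsum hlow hsum2 hsum3
    calc (∑' k : ℕ, ψ (k + n)) - π / n * (∑' k : ℕ, ((k : ℝ) + 1) * ψ (k + 1 + n))
        = (∑' k : ℕ, ψ (k + n)) - π / n * (∑' k : ℕ, (k : ℝ) * ψ (k + n)) := by rw [hT]
      _ ≤ PsiKerN ψ β n t₀ := hkey
      _ ≤ |PsiKerN ψ β n t₀| := le_abs_self _
      _ ≤ ⨆ t : ℝ, |PsiKerN ψ β n t| := le_ciSup hbdd t₀
  · exact ciSup_le hub
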